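/- Let T be a theory over a one-sorted first-order signature. Then the following are equivalent: (1) T is stably finite and smooth; (2) T is smooth and has a strong pre-witness. -/

import Mathlib

open FirstOrder FirstOrder.Language

universe u v

/-- `M` (with structure `inst`) is a model of the theory `T`. -/
def ModelsT (L : FirstOrder.Language.{u, v}) (T : L.Theory) (M : Type) (inst : L.Structure M) : Prop :=
  letI := inst
  T.Model M

/-- Realization of a formula, with the structure instance given explicitly. -/
def RealizeIn (L : FirstOrder.Language.{u, v}) (M : Type) (inst : L.Structure M) {α : Type}
    (φ : L.Formula α) (v : α → M) : Prop :=
  letI := inst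
  φ.Realize v

/-- A valuation `v` satisfies the arrangement `δ_V^E` determined on the finite variable
set `V` by the equivalence relation `E`. -/
def RealizesArr {M : Type} (E : Setoid ℕ) (V : Finset ℕ) (v : ℕ → M) : Prop :=
  ∀ x ∈ V, ∀ y ∈ V, (E.r x y ↔ v x = v y)

/-- `T` is stably finite: every quantifier-free formula satisfied in a model of `T` is
satisfied in a finite model of `T` of no greater cardinality. -/
def StablyFiniteT (L : FirstOrder.Language.{u, v}) (T : L.Theory) : Prop :=
  ∀ φ : L.Formula ℕ, φ.IsQF →
    ∀ (M : Type) (inst : L.Structure M), ModelsT L T M inst →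
      ∀ v : ℕ → M, RealizeIn L M inst φ v →
        ∃ (N : Type) (instN : L.Structure N), ModelsT L T N instN ∧ Finite N ∧
          Cardinal.mk N ≤ Cardinal.mk M ∧ ∃ w : ℕ → N, RealizeIn L N instN φ w

/-- `T` is finitely smooth: for every quantifier-free formula `φ`, model of `T` with a
valuation satisfying `φ`, and finite cardinal `κ` at least the size of the model, there
is a model of `T` of size exactly `κ` with a valuation satisfying `φ`. -/
def FinitelySmoothT (L : FirstOrder.Language.{u, v}) (T : L.Theory) : Prop :=
  ∀ φ : L.Formula ℕ, φ.IsQF →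
    ∀ (M : Type) (inst : L.Structure M), ModelsT L T M inst →
      ∀ v : ℕ → M, RealizeIn L M inst φ v →
        ∀ κ : ℕ, Cardinal.mk M ≤ (κ : Cardinal) →
          ∃ (N : Type) (instN : L.Structure N), ModelsT L T N instN ∧
            Cardinal.mk N = (κ : Cardinal) ∧ ∃ w : ℕ → N, RealizeIn L N instN φ w

/-- `T` is smooth: for every quantifier-free formula `φ`, model of `T` with a valuation
satisfying `φ`, and cardinal `κ` at least the size of the model, there is a model of `T`
of size exactly `κ` with a valuation satisfying `φ`. -/
def SmoothT (L : FirstOrder.Language.{u, v}) (T : L.Theory) : Prop :=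
  ∀ φ : L.Formula ℕ, φ.IsQF →
    ∀ (M : Type) (inst : L.Structure M), ModelsT L T M inst →
      ∀ v : ℕ → M, RealizeIn L M inst φ v →
        ∀ κ : Cardinal, Cardinal.mk M ≤ κ →
          ∃ (N : Type) (instN : L.Structure N), ModelsT L T N instN ∧
            Cardinal.mk N = κ ∧ ∃ w : ℕ → N, RealizeIn L N instN φ w

/-- `T` is stably infinite: every quantifier-free formula satisfiable in some model of `T`
is satisfiable in some model of `T` with infinite domain. -/
def StablyInfiniteT (L : FirstOrder.Language.{u, v}) (T : L.Theory) : Prop :=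
  ∀ φ : L.Formula ℕ, φ.IsQF →
    (∃ (M : Type) (inst : L.Structure M), ModelsT L T M inst ∧
      ∃ v : ℕ → M, RealizeIn L M inst φ v) →
    ∃ (M : Type) (inst : L.Structure M), ModelsT L T M inst ∧ Infinite M ∧
      ∃ v : ℕ → M, RealizeIn L M inst φ v

/-- `wit` is a pre-witness for `T`: it maps quantifier-free formulas to quantifier-free
formulas; `φ` and `∃x⃗. wit(φ)` (where `x⃗ = vars(wit(φ)) \ vars(φ)`) hold in exactly the
same models-with-valuations of `T`; and if `wit(φ)` is satisfiable in a model of `T`,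
then `φ` is satisfied in some model of `T` under a valuation in which every element of
the domain is the value of some variable of `wit(φ)`. -/
def IsPreWitness (L : FirstOrder.Language.{u, v}) (T : L.Theory) (wit : L.Formula ℕ → L.Formula ℕ) :
    Prop :=
  (∀ φ : L.Formula ℕ, φ.IsQF → (wit φ).IsQF) ∧
  (∀ φ : L.Formula ℕ, φ.IsQF →
    ∀ (M : Type) (inst : L.Structure M), ModelsT L T M inst → ∀ v : ℕ → M,
      (RealizeIn L M inst φ v ↔
        ∃ w : ℕ → M, (∀ x : ℕ, x ∉ (wit φ).freeVarFinset \ φ.freeVarFinset → w x = v x) ∧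
          RealizeIn L M inst (wit φ) w)) ∧
  (∀ φ : L.Formula ℕ, φ.IsQF →
    (∃ (M : Type) (inst : L.Structure M), ModelsT L T M inst ∧
      ∃ v : ℕ → M, RealizeIn L M inst (wit φ) v) →
    ∃ (M : Type) (inst : L.Structure M), ModelsT L T M inst ∧
      ∃ v : ℕ → M, RealizeIn L M inst φ v ∧
        ∀ a : M, ∃ x ∈ (wit φ).freeVarFinset, v x = a)

/-- `wit` is a strong pre-witness for `T`: a pre-witness such that in addition, for every
quantifier-free `φ`, finite variable set `V`, and arrangement `δ_V` of `V`, if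
`wit(φ) ∧ δ_V` is satisfiable in a model of `T`, then it is satisfied in some model of `T`
under a valuation in which every element of the domain is the value of some variable of
`wit(φ) ∧ δ_V`. -/
def IsStrongPreWitness (L : FirstOrder.Language.{u, v}) (T : L.Theory)
    (wit : L.Formula ℕ → L.Formula ℕ) : Prop :=
  IsPreWitness L T wit ∧
  ∀ φ : L.Formula ℕ, φ.IsQF → ∀ (V : Finset ℕ) (E : Setoid ℕ),
    (∃ (M : Type) (inst : L.Structure M), ModelsT L T M inst ∧
      ∃ v : ℕ → M, RealizeIn L M inst (wit φ) v ∧ RealizesArr E V v) →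
    ∃ (M : Type) (inst : L.Structure M), ModelsT L T M inst ∧
      ∃ v : ℕ → M, RealizeIn L M inst (wit φ) v ∧ RealizesArr E V v ∧
        ∀ a : M, ∃ x ∈ (wit φ).freeVarFinset ∪ V, v x = a


namespace SFW
variable {L : FirstOrder.Language.{u, v}}

/-- variable-equality formula -/
def eqf (x y : ℕ) : L.Formula ℕ := Term.equal (Term.var x) (Term.var y)

lemma fv_eqf (x y : ℕ) : (eqf (L := L) x y).freeVarFinset = {x, y} := by
  simp [eqf, Term.equal, Term.bdEqual, Term.relabel, Term.varFinsetLeft]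

lemma realize_eqf {M : Type} [L.Structure M] (x y : ℕ) (v : ℕ → M) :
    (eqf (L := L) x y).Realize v ↔ v x = v y := by
  simp [eqf]

lemma isQF_eqf (x y : ℕ) : (eqf (L := L) x y).IsQF :=
  BoundedFormula.IsAtomic.isQF (BoundedFormula.IsAtomic.equal _ _)

lemma fv_not (φ : L.Formula ℕ) : φ.not.freeVarFinset = φ.freeVarFinset := by
  simp [BoundedFormula.not]

lemma fv_inf (φ ψ : L.Formula ℕ) : (φ ⊓ ψ).freeVarFinset = φ.freeVarFinset ∪ ψ.freeVarFinset := by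
  simp [Min.min, BoundedFormula.not]

lemma fv_sup (φ ψ : L.Formula ℕ) : (φ ⊔ ψ).freeVarFinset = φ.freeVarFinset ∪ ψ.freeVarFinset := by
  simp [Max.max, BoundedFormula.not]

lemma fv_top : (⊤ : L.Formula ℕ).freeVarFinset = ∅ := by
  simp [Top.top, BoundedFormula.not]

lemma fv_bot : (⊥ : L.Formula ℕ).freeVarFinset = ∅ := by
  simp [Bot.bot]

lemma realize_congr_fv {M : Type} [L.Structure M] (φ : L.Formula ℕ) {v w : ℕ → M}
    (h : ∀ x ∈ φ.freeVarFinset, v x = w x) : φ.Realize v ↔ φ.Realize w := by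
  have h1 := BoundedFormula.realize_restrictFreeVar' (L := L) (M := M) (φ := φ)
    (s := (φ.freeVarFinset : Set ℕ)) (Set.Subset.rfl) (v := v) (xs := default)
  have h2 := BoundedFormula.realize_restrictFreeVar' (L := L) (M := M) (φ := φ)
    (s := (φ.freeVarFinset : Set ℕ)) (Set.Subset.rfl) (v := w) (xs := default)
  have key : (v ∘ (Subtype.val (p := fun x => x ∈ (φ.freeVarFinset : Set ℕ)))) = (w ∘ Subtype.val) := by
    funext x; exact h x.1 (by exact_mod_cast x.2)
  show BoundedFormula.Realize φ v default ↔ BoundedFormula.Realize φ w default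
  rw [← h1, ← h2, key]

/-- Finite conjunction of a list of formulas. -/
def conjL (l : List (L.Formula ℕ)) : L.Formula ℕ := l.foldr (· ⊓ ·) ⊤
/-- Finite disjunction of a list of formulas. -/
def disjL (l : List (L.Formula ℕ)) : L.Formula ℕ := l.foldr (· ⊔ ·) ⊥

lemma realize_conjL {M : Type} [L.Structure M] (l : List (L.Formula ℕ)) (v : ℕ → M) :
    (conjL l).Realize v ↔ ∀ φ ∈ l, φ.Realize v := by
  induction l with
  | nil => simp [conjL]
  | cons a l ih =>
      rw [show conjL (a :: l) = a ⊓ conjL l from rfl, Formula.realize_inf, ih]; simp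

lemma realize_disjL {M : Type} [L.Structure M] (l : List (L.Formula ℕ)) (v : ℕ → M) :
    (disjL l).Realize v ↔ ∃ φ ∈ l, φ.Realize v := by
  induction l with
  | nil => simp [disjL]
  | cons a l ih =>
      rw [show disjL (a :: l) = a ⊔ disjL l from rfl, Formula.realize_sup, ih]; simp

lemma fv_conjL (l : List (L.Formula ℕ)) :
    (conjL l).freeVarFinset = l.foldr (fun φ s => φ.freeVarFinset ∪ s) ∅ := by
  induction l with
  | nil => simp [conjL, fv_top]
  | cons a l ih => simp only [conjL, List.foldr] at *; rw [fv_inf, ih]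

lemma fv_disjL (l : List (L.Formula ℕ)) :
    (disjL l).freeVarFinset = l.foldr (fun φ s => φ.freeVarFinset ∪ s) ∅ := by
  induction l with
  | nil => simp [disjL, fv_bot]
  | cons a l ih => simp only [disjL, List.foldr] at *; rw [fv_sup, ih]

lemma mem_fv_foldr (l : List (L.Formula ℕ)) (x : ℕ) :
    x ∈ l.foldr (fun φ s => φ.freeVarFinset ∪ s) ∅ ↔ ∃ φ ∈ l, x ∈ φ.freeVarFinset := by
  induction l with
  | nil => simp
  | cons a l ih => simp [List.foldr, ih]

lemma isQF_conjL (l : List (L.Formula ℕ)) (h : ∀ φ ∈ l, φ.IsQF) : (conjL l).IsQF := by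
  induction l with
  | nil => exact BoundedFormula.IsQF.top
  | cons a l ih =>
      exact BoundedFormula.IsQF.inf (h a (by simp)) (ih fun φ hφ => h φ (by simp [hφ]))

lemma isQF_disjL (l : List (L.Formula ℕ)) (h : ∀ φ ∈ l, φ.IsQF) : (disjL l).IsQF := by
  induction l with
  | nil => exact BoundedFormula.isQF_bot
  | cons a l ih =>
      exact BoundedFormula.IsQF.sup (h a (by simp)) (ih fun φ hφ => h φ (by simp [hφ]))

/-- literal asserting (in)equality of two variables according to a Bool -/
def arrLit (b : Bool) (x y : ℕ) : L.Formula ℕ := if b then eqf x y else (eqf x y).not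

lemma fv_arrLit (b : Bool) (x y : ℕ) : (arrLit (L := L) b x y).freeVarFinset = {x, y} := by
  cases b <;> simp [arrLit, fv_not, fv_eqf]

lemma realize_arrLit {M : Type} [L.Structure M] (b : Bool) (x y : ℕ) (v : ℕ → M) :
    (arrLit (L := L) b x y).Realize v ↔ (b = true ↔ v x = v y) := by
  cases b <;> simp [arrLit, Formula.realize_not, realize_eqf]

lemma isQF_arrLit (b : Bool) (x y : ℕ) : (arrLit (L := L) b x y).IsQF := by
  cases b
  · exact (isQF_eqf _ _).not
  · exact isQF_eqf _ _

/-- The arrangement formula on variable set `U`, where `s` designates the pairs to equate. -/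
noncomputable def arrFm (U : Finset ℕ) (s : Finset (ℕ × ℕ)) : L.Formula ℕ :=
  conjL ((U ×ˢ U).toList.map fun p => arrLit (decide (p ∈ s)) p.1 p.2)

lemma realize_arrFm {M : Type} [L.Structure M] (U : Finset ℕ) (s : Finset (ℕ × ℕ)) (v : ℕ → M) :
    (arrFm (L := L) U s).Realize v ↔ ∀ x ∈ U, ∀ y ∈ U, ((x, y) ∈ s ↔ v x = v y) := by
  rw [arrFm, realize_conjL]
  constructor
  · intro h x hx y hy
    have := h _ (List.mem_map.mpr ⟨(x, y), Finset.mem_toList.mpr (Finset.mem_product.mpr ⟨hx, hy⟩), rfl⟩)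
    rw [realize_arrLit] at this
    simpa using this
  · intro h φ hφ
    obtain ⟨p, hp, rfl⟩ := List.mem_map.mp hφ
    rw [realize_arrLit]
    obtain ⟨h1, h2⟩ := Finset.mem_product.mp (Finset.mem_toList.mp hp)
    simpa using h _ h1 _ h2

lemma fv_arrFm (U : Finset ℕ) (s : Finset (ℕ × ℕ)) :
    (arrFm (L := L) U s).freeVarFinset = U := by
  ext x
  rw [arrFm, fv_conjL, mem_fv_foldr]
  constructor
  · rintro ⟨φ, hφ, hx⟩
    obtain ⟨p, hp, rfl⟩ := List.mem_map.mp hφ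
    rw [fv_arrLit] at hx
    obtain ⟨h1, h2⟩ := Finset.mem_product.mp (Finset.mem_toList.mp hp)
    rcases Finset.mem_insert.mp hx with rfl | hx
    · exact h1
    · rwa [Finset.mem_singleton.mp hx]
  · intro hx
    refine ⟨arrLit (decide ((x, x) ∈ s)) x x,
      List.mem_map.mpr ⟨(x, x), Finset.mem_toList.mpr (Finset.mem_product.mpr ⟨hx, hx⟩), rfl⟩, ?_⟩
    rw [fv_arrLit]; simp

lemma isQF_arrFm (U : Finset ℕ) (s : Finset (ℕ × ℕ)) : (arrFm (L := L) U s).IsQF := by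
  apply isQF_conjL
  intro φ hφ
  obtain ⟨p, _, rfl⟩ := List.mem_map.mp hφ
  exact isQF_arrLit _ _ _

open Classical in
/-- The equality pattern of a valuation on a variable set. -/
noncomputable def patt {M : Type} (v : ℕ → M) (U : Finset ℕ) : Finset (ℕ × ℕ) :=
  (U ×ˢ U).filter fun p => v p.1 = v p.2

lemma realize_arrFm_patt {M : Type} [L.Structure M] (v : ℕ → M) (U : Finset ℕ) :
    (arrFm (L := L) U (patt v U)).Realize v := by
  rw [realize_arrFm]
  intro x hx y hy
  classical
  constructor
  · intro h; exact (Finset.mem_filter.mp h).2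
  · intro h; exact Finset.mem_filter.mpr ⟨Finset.mem_product.mpr ⟨hx, hy⟩, h⟩

lemma ker_eq_of_realize_arrFm {M N : Type} [L.Structure M] [L.Structure N]
    {U : Finset ℕ} {s : Finset (ℕ × ℕ)} {v : ℕ → M} {u : ℕ → N}
    (hv : (arrFm (L := L) U s).Realize v) (hu : (arrFm (L := L) U s).Realize u) :
    ∀ x ∈ U, ∀ y ∈ U, (v x = v y ↔ u x = u y) := by
  rw [realize_arrFm] at hv hu
  intro x hx y hy
  rw [← hv x hx y hy, hu x hx y hy]

lemma card_image_eq_of_ker {β γ : Type*} (U : Finset ℕ) (f : ℕ → β) (g : ℕ → γ)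
    [DecidableEq β] [DecidableEq γ]
    (h : ∀ x ∈ U, ∀ y ∈ U, (f x = f y ↔ g x = g y)) :
    (U.image f).card = (U.image g).card := by
  classical
  refine Finset.card_bij (fun a ha => g (Finset.mem_image.mp ha).choose) ?_ ?_ ?_
  · intro a ha
    exact Finset.mem_image.mpr ⟨_, (Finset.mem_image.mp ha).choose_spec.1, rfl⟩
  · intro a ha a' ha' heq
    have s1 := (Finset.mem_image.mp ha).choose_spec
    have s2 := (Finset.mem_image.mp ha').choose_spec
    rw [← s1.2, ← s2.2]
    exact (h _ s1.1 _ s2.1).mpr heq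
  · intro b hb
    obtain ⟨y, hy, rfl⟩ := Finset.mem_image.mp hb
    refine ⟨f y, Finset.mem_image.mpr ⟨y, hy, rfl⟩, ?_⟩
    have s1 := (Finset.mem_image.mp (Finset.mem_image.mpr ⟨y, hy, rfl⟩ :
      f y ∈ U.image f)).choose_spec
    exact (h _ s1.1 _ hy).mp s1.2

variable (L : FirstOrder.Language.{u, v}) (T : L.Theory)

/-- satisfiability in a model of T -/
def SatT (φ : L.Formula ℕ) : Prop :=
  ∃ (M : Type) (inst : L.Structure M), ModelsT L T M inst ∧ ∃ v : ℕ → M, RealizeIn L M inst φ v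

/-- there is a covered model of `φ ⊓ arrFm U s` -/
def Star (φ : L.Formula ℕ) (U : Finset ℕ) (s : Finset (ℕ × ℕ)) : Prop :=
  ∃ (N : Type) (instN : L.Structure N), ModelsT L T N instN ∧
    ∃ u : ℕ → N, RealizeIn L N instN (φ ⊓ arrFm U s) u ∧ ∀ a : N, ∃ x ∈ U, u x = a

/-- `φ` has a finite model of `T` of size `k` -/
def QSize (φ : L.Formula ℕ) (k : ℕ) : Prop :=
  ∃ (N : Type) (instN : L.Structure N), ModelsT L T N instN ∧ Finite N ∧ Nat.card N = k ∧
    ∃ u : ℕ → N, RealizeIn L N instN φ u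

open Classical in
noncomputable def minSize (φ : L.Formula ℕ) : ℕ :=
  if h : ∃ k, QSize L T φ k then Nat.find h else 0

noncomputable def BFor (φ : L.Formula ℕ) : ℕ := φ.freeVarFinset.sup id

noncomputable def nFor (φ : L.Formula ℕ) : ℕ :=
  (φ.freeVarFinset ×ˢ φ.freeVarFinset).powerset.sup
    (fun s0 => minSize L T (φ ⊓ arrFm φ.freeVarFinset s0))

noncomputable def YFor (φ : L.Formula ℕ) : Finset ℕ :=
  (Finset.range (nFor L T φ)).image (fun i => BFor L φ + 1 + i)

noncomputable def UFor (φ : L.Formula ℕ) : Finset ℕ := φ.freeVarFinset ∪ YFor L T φ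

open Classical in
noncomputable def SFor (φ : L.Formula ℕ) : Finset (Finset (ℕ × ℕ)) :=
  ((UFor L T φ ×ˢ UFor L T φ).powerset).filter (Star L T φ (UFor L T φ))

noncomputable def psiFor (φ : L.Formula ℕ) : L.Formula ℕ :=
  disjL ((SFor L T φ).toList.map fun s => φ ⊓ arrFm (UFor L T φ) s)

open Classical in
noncomputable def wit (φ : L.Formula ℕ) : L.Formula ℕ :=
  if φ.IsQF ∧ SatT L T φ then psiFor L T φ else φ

lemma fv_mem_lt_Y {φ : L.Formula ℕ} {x y : ℕ} (hx : x ∈ φ.freeVarFinset)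
    (hy : y ∈ YFor L T φ) : x < y := by
  obtain ⟨i, _, rfl⟩ := Finset.mem_image.mp hy
  have : x ≤ BFor L φ := Finset.le_sup (f := id) hx
  omega

lemma Y_disj_fv {φ : L.Formula ℕ} {x : ℕ} (hx : x ∈ φ.freeVarFinset) : x ∉ YFor L T φ :=
  fun h => lt_irrefl x (fv_mem_lt_Y L T hx h)

lemma fv_subset_U (φ : L.Formula ℕ) : φ.freeVarFinset ⊆ UFor L T φ :=
  Finset.subset_union_left

lemma fv_inf_arr (φ : L.Formula ℕ) (s : Finset (ℕ × ℕ)) :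
    (φ ⊓ arrFm (UFor L T φ) s).freeVarFinset = UFor L T φ := by
  rw [fv_inf, fv_arrFm]
  exact Finset.union_eq_right.mpr (fv_subset_U L T φ)

lemma fv_psi_subset (φ : L.Formula ℕ) : (psiFor L T φ).freeVarFinset ⊆ UFor L T φ := by
  intro x hx
  rw [psiFor, fv_disjL, mem_fv_foldr] at hx
  obtain ⟨ψ, hψ, hx⟩ := hx
  obtain ⟨s, _, rfl⟩ := List.mem_map.mp hψ
  rwa [fv_inf_arr] at hx

lemma fv_psi_of_mem {φ : L.Formula ℕ} {s : Finset (ℕ × ℕ)} (hs : s ∈ SFor L T φ) :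
    (psiFor L T φ).freeVarFinset = UFor L T φ := by
  refine subset_antisymm (fv_psi_subset L T φ) ?_
  intro x hx
  rw [psiFor, fv_disjL, mem_fv_foldr]
  exact ⟨φ ⊓ arrFm (UFor L T φ) s,
    List.mem_map.mpr ⟨s, Finset.mem_toList.mpr hs, rfl⟩, by rw [fv_inf_arr]; exact hx⟩

lemma isQF_psi {φ : L.Formula ℕ} (h : φ.IsQF) : (psiFor L T φ).IsQF := by
  apply isQF_disjL
  intro ψ hψ
  obtain ⟨s, _, rfl⟩ := List.mem_map.mp hψ
  exact h.inf (isQF_arrFm _ _)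

lemma realize_psi_iff {M : Type} [L.Structure M] (φ : L.Formula ℕ) (v : ℕ → M) :
    (psiFor L T φ).Realize v ↔
      ∃ s ∈ SFor L T φ, (φ ⊓ arrFm (UFor L T φ) s).Realize v := by
  rw [psiFor, realize_disjL]
  constructor
  · rintro ⟨ψ, hψ, h⟩
    obtain ⟨s, hs, rfl⟩ := List.mem_map.mp hψ
    exact ⟨s, Finset.mem_toList.mp hs, h⟩
  · rintro ⟨s, hs, h⟩
    exact ⟨_, List.mem_map.mpr ⟨s, Finset.mem_toList.mpr hs, rfl⟩, h⟩

lemma minSize_le {φ : L.Formula ℕ} {k : ℕ} (h : QSize L T φ k) : minSize L T φ ≤ k := by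
  classical
  have h' : ∃ k, QSize L T φ k := ⟨k, h⟩
  rw [minSize, dif_pos h']
  exact Nat.find_min' h' h

lemma QSize_minSize {φ : L.Formula ℕ} (h : ∃ k, QSize L T φ k) :
    QSize L T φ (minSize L T φ) := by
  classical
  rw [minSize, dif_pos h]
  exact Nat.find_spec h

lemma card_Y (φ : L.Formula ℕ) : (YFor L T φ).card = nFor L T φ := by
  rw [YFor, Finset.card_image_of_injective _ (fun a b h => by omega), Finset.card_range]

lemma coveredModel (hSF : StablyFiniteT L T) {φ : L.Formula ℕ} (hQF : φ.IsQF)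
    (M : Type) (inst : L.Structure M) (hM : ModelsT L T M inst) (v : ℕ → M)
    (hv : RealizeIn L M inst φ v) :
    ∃ s ∈ SFor L T φ, ∃ (N : Type) (instN : L.Structure N), ModelsT L T N instN ∧ Finite N ∧
      Cardinal.mk N ≤ Cardinal.mk M ∧
      ∃ u : ℕ → N, RealizeIn L N instN (φ ⊓ arrFm (UFor L T φ) s) u ∧
        (∀ a : N, ∃ y ∈ YFor L T φ, u y = a) ∧
        (∀ x ∈ φ.freeVarFinset, ∀ y ∈ φ.freeVarFinset, (u x = u y ↔ v x = v y)) := by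
  classical
  letI := inst
  set F := φ.freeVarFinset with hF
  set s0 := patt v F with hs0
  have hs0sub : s0 ⊆ F ×ˢ F := Finset.filter_subset _ _
  have hψ0QF : (φ ⊓ arrFm (L := L) F s0).IsQF := hQF.inf (isQF_arrFm _ _)
  have hv0 : RealizeIn L M inst (φ ⊓ arrFm F s0) v := by
    show (φ ⊓ arrFm (L := L) F s0).Realize v
    rw [Formula.realize_inf]
    exact ⟨hv, realize_arrFm_patt v F⟩
  obtain ⟨N1, inst1, hN1, hfin1, hcard1, w1, hw1⟩ := hSF _ hψ0QF M inst hM v hv0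
  have hex : ∃ k, QSize L T (φ ⊓ arrFm F s0) k :=
    ⟨Nat.card N1, N1, inst1, hN1, hfin1, rfl, w1, hw1⟩
  obtain ⟨N, instN, hN, hfinN, hcardN, u1, hu1⟩ := QSize_minSize L T hex
  letI := instN
  haveI := hfinN
  haveI : Nonempty N := ⟨u1 0⟩
  have cardpos : 0 < Nat.card N := Nat.card_pos
  have hminle : minSize L T (φ ⊓ arrFm F s0) ≤ Nat.card N1 := minSize_le L T
    ⟨N1, inst1, hN1, hfin1, rfl, w1, hw1⟩
  have hcard_le_M : Cardinal.mk N ≤ Cardinal.mk M := by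
    calc Cardinal.mk N = ↑(Nat.card N) := Nat.cast_card.symm
    _ ≤ ↑(Nat.card N1) := by exact_mod_cast (hcardN ▸ hminle)
    _ = Cardinal.mk N1 := @Nat.cast_card N1 hfin1
    _ ≤ Cardinal.mk M := hcard1
  have hcard_le_n : Nat.card N ≤ nFor L T φ := by
    rw [hcardN]
    exact Finset.le_sup (f := fun s0 => minSize L T (φ ⊓ arrFm φ.freeVarFinset s0))
      (Finset.mem_powerset.mpr hs0sub)
  set e := Finite.equivFin N with he
  set u : ℕ → N := fun x =>
    if x ∈ YFor L T φ then e.symm ⟨(x - (BFor L φ + 1)) % Nat.card N, Nat.mod_lt _ cardpos⟩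
    else u1 x with hu
  have hagree : ∀ x ∈ (φ ⊓ arrFm (L := L) F s0).freeVarFinset, u1 x = u x := by
    intro x hx
    have hxF : x ∈ F := by
      rw [fv_inf, fv_arrFm] at hx
      simpa [hF] using hx
    rw [hu]
    simp [Y_disj_fv L T hxF]
  have hu0 : (φ ⊓ arrFm (L := L) F s0).Realize u := by
    rw [← realize_congr_fv _ hagree]
    exact hu1
  have hcover : ∀ a : N, ∃ y ∈ YFor L T φ, u y = a := by
    intro a
    refine ⟨BFor L φ + 1 + (e a).1, ?_, ?_⟩
    · exact Finset.mem_image.mpr ⟨(e a).1, Finset.mem_range.mpr (lt_of_lt_of_le (e a).2 hcard_le_n), rfl⟩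
    · rw [hu]
      have hmem : BFor L φ + 1 + (e a).1 ∈ YFor L T φ :=
        Finset.mem_image.mpr ⟨(e a).1, Finset.mem_range.mpr (lt_of_lt_of_le (e a).2 hcard_le_n), rfl⟩
      simp only [hmem, if_pos]
      rw [Equiv.symm_apply_eq]
      apply Fin.ext
      show (BFor L φ + 1 + (e a).1 - (BFor L φ + 1)) % Nat.card N = (e a).1
      rw [Nat.add_sub_cancel_left]
      exact Nat.mod_eq_of_lt (e a).2
  have huφ : φ.Realize u ∧ (arrFm (L := L) F s0).Realize u := Formula.realize_inf.mp hu0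
  have hker : ∀ x ∈ F, ∀ y ∈ F, (u x = u y ↔ v x = v y) := by
    intro x hx y hy
    exact (ker_eq_of_realize_arrFm huφ.2 (realize_arrFm_patt v F) x hx y hy)
  set s := patt u (UFor L T φ) with hs
  have hreal : RealizeIn L N instN (φ ⊓ arrFm (UFor L T φ) s) u := by
    show (φ ⊓ arrFm (L := L) (UFor L T φ) s).Realize u
    rw [Formula.realize_inf]
    exact ⟨huφ.1, realize_arrFm_patt u _⟩
  have hsmem : s ∈ SFor L T φ := by
    rw [SFor, Finset.mem_filter]
    refine ⟨Finset.mem_powerset.mpr (Finset.filter_subset _ _), ?_⟩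
    exact ⟨N, instN, hN, u, hreal, fun a =>
      (hcover a).elim fun y hy => ⟨y, Finset.mem_union_right _ hy.1, hy.2⟩⟩
  exact ⟨s, hsmem, N, instN, hN, hfinN, hcard_le_M, u, hreal, hcover, hker⟩

lemma embed_ext {N M : Type} [Finite N] (hcard : Cardinal.mk N ≤ Cardinal.mk M)
    (F : Finset ℕ) (u : ℕ → N) (v : ℕ → M)
    (hker : ∀ x ∈ F, ∀ y ∈ F, (u x = u y ↔ v x = v y)) :
    ∃ g : N → M, Function.Injective g ∧ ∀ x ∈ F, g (u x) = v x := by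
  classical
  set S : Set N := u '' ↑F with hSdef
  set T0 : Set M := v '' ↑F with hTdef
  have hSmem : ∀ a : ↥S, ∃ x, x ∈ F ∧ u x = a.1 := by
    rintro ⟨a, ha⟩
    obtain ⟨x, hx, hux⟩ := ha
    exact ⟨x, hx, hux⟩
  set pk : ↥S → ℕ := fun a => Classical.choose (hSmem a) with hpk
  have pk1 : ∀ a : ↥S, pk a ∈ F ∧ u (pk a) = a.1 := fun a => Classical.choose_spec (hSmem a)
  set fS : ↥S → ↥T0 := fun a => ⟨v (pk a), Set.mem_image_of_mem v (by exact (pk1 a).1)⟩ with hfS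
  have fS_inj : Function.Injective fS := by
    intro a b h
    have h1 : v (pk a) = v (pk b) := congrArg Subtype.val h
    have h2 : u (pk a) = u (pk b) := (hker _ (pk1 a).1 _ (pk1 b).1).mpr h1
    ext
    rw [← (pk1 a).2, ← (pk1 b).2, h2]
  have fS_surj : Function.Surjective fS := by
    rintro ⟨b, hb⟩
    obtain ⟨x, hx, hvx⟩ := hb
    refine ⟨⟨u x, Set.mem_image_of_mem u hx⟩, ?_⟩
    have h2 : u (pk ⟨u x, Set.mem_image_of_mem u hx⟩) = u x := (pk1 _).2
    have h3 : v (pk ⟨u x, Set.mem_image_of_mem u hx⟩) = v x :=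
      (hker _ (pk1 _).1 _ hx).mp h2
    exact Subtype.ext (by rw [hfS]; exact h3.trans hvx)
  have hST : Cardinal.mk ↥S = Cardinal.mk ↥T0 :=
    Cardinal.mk_congr (Equiv.ofBijective fS ⟨fS_inj, fS_surj⟩)
  haveI : Finite ↥S := ((Finset.finite_toSet F).image u).to_subtype
  have hlt : Cardinal.mk ↥S < Cardinal.aleph0 := Cardinal.lt_aleph0_of_finite ↥S
  have hcompl : Cardinal.mk ↥(Sᶜ) ≤ Cardinal.mk ↥(T0ᶜ) := by
    have h1 : Cardinal.mk ↥(Sᶜ) + Cardinal.mk ↥S ≤ Cardinal.mk ↥(T0ᶜ) + Cardinal.mk ↥T0 := by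
      rw [add_comm, Cardinal.mk_sum_compl S, add_comm, Cardinal.mk_sum_compl T0]
      exact hcard
    rw [hST] at h1
    exact (Cardinal.add_le_add_iff_of_lt_aleph0 (hST ▸ hlt)).mp h1
  obtain ⟨emb⟩ := (Cardinal.le_def _ _).mp hcompl
  refine ⟨fun a => if ha : a ∈ S then (fS ⟨a, ha⟩).1 else (emb ⟨a, ha⟩).1, ?_, ?_⟩
  · intro a b h
    dsimp only at h
    by_cases ha : a ∈ S <;> by_cases hb : b ∈ S
    · rw [dif_pos ha, dif_pos hb] at h
      exact congrArg Subtype.val (fS_inj (Subtype.ext h))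
    · rw [dif_pos ha, dif_neg hb] at h
      exact absurd (h ▸ (fS ⟨a, ha⟩).2) (emb ⟨b, hb⟩).2
    · rw [dif_neg ha, dif_pos hb] at h
      exact absurd (h ▸ (emb ⟨a, ha⟩).2) (by simp [(fS ⟨b, hb⟩).2])
    · rw [dif_neg ha, dif_neg hb] at h
      exact congrArg Subtype.val (emb.injective (Subtype.ext h))
  · intro x hx
    have hm : u x ∈ S := Set.mem_image_of_mem u hx
    dsimp only
    rw [dif_pos hm]
    have h2 : u (pk ⟨u x, hm⟩) = u x := (pk1 _).2
    exact (hker _ (pk1 _).1 _ hx).mp h2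

open Classical in
lemma wit_eq_psi {φ : L.Formula ℕ} (h1 : φ.IsQF) (h2 : SatT L T φ) :
    wit L T φ = psiFor L T φ := by
  rw [wit, if_pos ⟨h1, h2⟩]

open Classical in
lemma wit_eq_self {φ : L.Formula ℕ} (h : ¬(φ.IsQF ∧ SatT L T φ)) : wit L T φ = φ := by
  rw [wit, if_neg h]

lemma isQF_wit {φ : L.Formula ℕ} (hQF : φ.IsQF) : (wit L T φ).IsQF := by
  by_cases hsat : SatT L T φ
  · rw [wit_eq_psi L T hQF hsat]; exact isQF_psi L T hQF
  · rw [wit_eq_self L T (fun h => hsat h.2)]; exact hQF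

lemma wit_equiv (hSF : StablyFiniteT L T) {φ : L.Formula ℕ} (hQF : φ.IsQF)
    (M : Type) (inst : L.Structure M) (hM : ModelsT L T M inst) (v : ℕ → M) :
    RealizeIn L M inst φ v ↔
      ∃ w : ℕ → M, (∀ x : ℕ, x ∉ (wit L T φ).freeVarFinset \ φ.freeVarFinset → w x = v x) ∧
        RealizeIn L M inst (wit L T φ) w := by
  classical
  letI := inst
  by_cases hsat : SatT L T φ
  · rw [wit_eq_psi L T hQF hsat]
    constructor
    · intro hv
      obtain ⟨s, hsmem, N, instN, hN, hfinN, hcardle, u, hu, hcov, hker⟩ :=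
        coveredModel L T hSF hQF M inst hM v hv
      haveI := hfinN
      have hureal : (φ ⊓ arrFm (L := L) (UFor L T φ) s).Realize (M := N) u := hu
      letI := instN
      have huφ := (Formula.realize_inf.mp hureal).1
      have huarr := (Formula.realize_inf.mp hureal).2
      obtain ⟨g, ginj, gspec⟩ := embed_ext hcardle φ.freeVarFinset u v hker
      set w : ℕ → M := fun x => if x ∈ UFor L T φ then g (u x) else v x with hw
      have hwF : ∀ x ∈ φ.freeVarFinset, w x = v x := by
        intro x hx
        rw [hw]
        dsimp only
        rw [if_pos (fv_subset_U L T φ hx)]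
        exact gspec x hx
      refine ⟨w, ?_, ?_⟩
      · intro x hx
        by_cases hxU : x ∈ UFor L T φ
        · by_cases hxF : x ∈ φ.freeVarFinset
          · exact hwF x hxF
          · exfalso
            exact hx (Finset.mem_sdiff.mpr ⟨by rw [fv_psi_of_mem L T hsmem]; exact hxU, hxF⟩)
        · rw [hw]; dsimp only; rw [if_neg hxU]
      · show (psiFor L T φ).Realize w
        rw [realize_psi_iff]
        refine ⟨s, hsmem, ?_⟩
        rw [Formula.realize_inf]
        constructor
        · exact (realize_congr_fv φ (fun x hx => (hwF x hx).symm)).mp hv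
        · rw [realize_arrFm]
          intro x hx y hy
          have h1 : w x = g (u x) := by rw [hw]; dsimp only; rw [if_pos hx]
          have h2 : w y = g (u y) := by rw [hw]; dsimp only; rw [if_pos hy]
          rw [h1, h2, (realize_arrFm _ _ _).mp huarr x hx y hy]
          exact ⟨congrArg g, fun h => ginj h⟩
    · rintro ⟨w, hagree, hw⟩
      have hw' : (psiFor L T φ).Realize (M := M) w := hw
      rw [realize_psi_iff] at hw'
      obtain ⟨s, hs, hreal⟩ := hw'
      have hφw : φ.Realize (M := M) w := (Formula.realize_inf.mp hreal).1
      have : ∀ x ∈ φ.freeVarFinset, w x = v x := by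
        intro x hx
        exact hagree x (fun hmem => (Finset.mem_sdiff.mp hmem).2 hx)
      exact (realize_congr_fv φ this).mp hφw
  · rw [wit_eq_self L T (fun h => hsat h.2)]
    constructor
    · intro hv
      exact absurd ⟨M, inst, hM, v, hv⟩ hsat
    · rintro ⟨w, _, hw⟩
      exact absurd ⟨M, inst, hM, w, hw⟩ hsat

lemma wit_witness (hSF : StablyFiniteT L T) {φ : L.Formula ℕ} (hQF : φ.IsQF)
    (h : ∃ (M : Type) (inst : L.Structure M), ModelsT L T M inst ∧
      ∃ v : ℕ → M, RealizeIn L M inst (wit L T φ) v) :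
    ∃ (M : Type) (inst : L.Structure M), ModelsT L T M inst ∧
      ∃ v : ℕ → M, RealizeIn L M inst φ v ∧
        ∀ a : M, ∃ x ∈ (wit L T φ).freeVarFinset, v x = a := by
  classical
  by_cases hsat : SatT L T φ
  · obtain ⟨M, inst, hM, v, hv⟩ := h
    rw [wit_eq_psi L T hQF hsat] at hv ⊢
    letI := inst
    have hv' : (psiFor L T φ).Realize (M := M) v := hv
    rw [realize_psi_iff] at hv'
    obtain ⟨s, hs, _⟩ := hv'
    have hstar : Star L T φ (UFor L T φ) s := (Finset.mem_filter.mp hs).2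
    obtain ⟨N, instN, hN, u, hreal, hcov⟩ := hstar
    letI := instN
    have hφu : φ.Realize (M := N) u :=
      (Formula.realize_inf.mp (show (φ ⊓ arrFm (L := L) (UFor L T φ) s).Realize u from hreal)).1
    refine ⟨N, instN, hN, u, hφu, ?_⟩
    intro a
    obtain ⟨x, hx, hxa⟩ := hcov a
    exact ⟨x, by rw [fv_psi_of_mem L T hs]; exact hx, hxa⟩
  · obtain ⟨M, inst, hM, v, hv⟩ := h
    rw [wit_eq_self L T (fun hh => hsat hh.2)] at hv
    exact absurd ⟨M, inst, hM, v, hv⟩ hsat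

lemma wit_strong (hSm : SmoothT L T) {φ : L.Formula ℕ} (hQF : φ.IsQF)
    (V : Finset ℕ) (E : Setoid ℕ)
    (h : ∃ (M : Type) (inst : L.Structure M), ModelsT L T M inst ∧
      ∃ v : ℕ → M, RealizeIn L M inst (wit L T φ) v ∧ RealizesArr E V v) :
    ∃ (M : Type) (inst : L.Structure M), ModelsT L T M inst ∧
      ∃ v : ℕ → M, RealizeIn L M inst (wit L T φ) v ∧ RealizesArr E V v ∧
        ∀ a : M, ∃ x ∈ (wit L T φ).freeVarFinset ∪ V, v x = a := by
  classical
  obtain ⟨M, inst, hM, v, hv, hvArr⟩ := h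
  by_cases hsat : SatT L T φ
  swap
  · rw [wit_eq_self L T (fun hh => hsat hh.2)] at hv
    exact absurd ⟨M, inst, hM, v, hv⟩ hsat
  rw [wit_eq_psi L T hQF hsat] at hv
  letI := inst
  have hv' : (psiFor L T φ).Realize (M := M) v := hv
  rw [realize_psi_iff] at hv'
  obtain ⟨s, hs, hreal⟩ := hv'
  have hstar : Star L T φ (UFor L T φ) s := (Finset.mem_filter.mp hs).2
  obtain ⟨N0, instN0, hN0, u0, hreal0, hcov0⟩ := hstar
  letI := instN0
  set U := UFor L T φ with hU
  -- N0 is finite, covered by U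
  haveI hfin0 : Finite N0 := by
    rw [← Set.finite_univ_iff]
    apply Set.Finite.subset ((U.finite_toSet).image u0)
    intro a _
    obtain ⟨x, hx, hxa⟩ := hcov0 a
    exact ⟨x, hx, hxa⟩
  haveI := Fintype.ofFinite N0
  set m := Nat.card N0 with hm
  set A : Finset M := U.image v with hA
  set D : Finset M := (V.image v) \ A with hD
  set k := D.card with hk
  -- kernels of u0 and v agree on U
  have hreal0' : (φ ⊓ arrFm (L := L) U s).Realize (M := N0) u0 := hreal0
  have harr0 := (Formula.realize_inf.mp hreal0').2
  have harrv := (Formula.realize_inf.mp hreal).2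
  have hker0v : ∀ x ∈ U, ∀ y ∈ U, (u0 x = u0 y ↔ v x = v y) :=
    ker_eq_of_realize_arrFm harr0 harrv
  have himg0 : U.image u0 = Finset.univ := by
    ext a
    simp only [Finset.mem_univ, iff_true]
    obtain ⟨x, hx, hxa⟩ := hcov0 a
    exact Finset.mem_image.mpr ⟨x, hx, hxa⟩
  have hmA : m = A.card := by
    rw [hm, Nat.card_eq_fintype_card, ← Finset.card_univ, ← himg0, hA]
    exact card_image_eq_of_ker U u0 v hker0v
  -- apply smoothness to get a model of size m + k
  have hmkN0 : Cardinal.mk N0 ≤ ((m + k : ℕ) : Cardinal) := by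
    rw [← Nat.cast_card]
    exact_mod_cast Nat.le_add_right m k
  obtain ⟨N', instN', hN', hcard', u', hu'⟩ :=
    hSm (φ ⊓ arrFm U s) (hQF.inf (isQF_arrFm _ _)) N0 instN0 hN0 u0 hreal0 _ hmkN0
  letI := instN'
  haveI hfin' : Finite N' := by
    rw [← Cardinal.mk_lt_aleph0_iff, hcard']
    exact Cardinal.nat_lt_aleph0 _
  haveI := Fintype.ofFinite N'
  have hcardN' : Fintype.card N' = m + k := by
    have h1 : ((Fintype.card N' : ℕ) : Cardinal) = ((m + k : ℕ) : Cardinal) := by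
      rw [← Cardinal.mk_fintype, hcard']
    exact_mod_cast h1
  have hu'real : (φ ⊓ arrFm (L := L) U s).Realize (M := N') u' := hu'
  have harr' := (Formula.realize_inf.mp hu'real).2
  have hker'v : ∀ x ∈ U, ∀ y ∈ U, (u' x = u' y ↔ v x = v y) :=
    ker_eq_of_realize_arrFm harr' harrv
  set A' : Finset N' := U.image u' with hA'
  have hcardA' : A'.card = m := by
    rw [hA', hmA]
    exact card_image_eq_of_ker U u' v hker'v
  set C : Finset N' := Finset.univ \ A' with hC
  have hcardC : C.card = k := by
    rw [hC, Finset.card_sdiff_of_subset (Finset.subset_univ _), Finset.card_univ, hcardN', hcardA']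
    omega
  have hDC : D.card = C.card := by rw [hcardC, hk]
  set σ : {x // x ∈ D} ≃ {x // x ∈ C} := Finset.equivOfCardEq hDC with hσ
  -- the new valuation
  set u'' : ℕ → N' := fun x =>
    if hxU : x ∈ U then u' x
    else if hxv : v x ∈ A then u' (Finset.mem_image.mp hxv).choose
    else if hxV : x ∈ V then
      (σ ⟨v x, Finset.mem_sdiff.mpr ⟨Finset.mem_image.mpr ⟨x, hxV, rfl⟩, hxv⟩⟩).1
    else u' 0 with hu''
  -- characterization of u'' on U ∪ V
  have hchar : ∀ x, x ∈ U ∪ V →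
      (∃ y ∈ U, v y = v x ∧ u'' x = u' y) ∨
      (∃ (hd : v x ∈ D), x ∈ V ∧ u'' x = (σ ⟨v x, hd⟩).1) := by
    intro x hx
    by_cases hxU : x ∈ U
    · exact Or.inl ⟨x, hxU, rfl, by rw [hu'']; dsimp only; rw [dif_pos hxU]⟩
    · have hxV : x ∈ V := (Finset.mem_union.mp hx).resolve_left hxU
      by_cases hxv : v x ∈ A
      · obtain ⟨hy1, hy2⟩ := (Finset.mem_image.mp hxv).choose_spec
        refine Or.inl ⟨(Finset.mem_image.mp hxv).choose, hy1, hy2, ?_⟩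
        rw [hu'']; dsimp only; rw [dif_neg hxU, dif_pos hxv]
      · have hd : v x ∈ D := Finset.mem_sdiff.mpr ⟨Finset.mem_image.mpr ⟨x, hxV, rfl⟩, hxv⟩
        refine Or.inr ⟨hd, hxV, ?_⟩
        rw [hu'']; dsimp only; rw [dif_neg hxU, dif_neg hxv, dif_pos hxV]
  have hmemA' : ∀ y ∈ U, u' y ∈ A' := fun y hy => Finset.mem_image.mpr ⟨y, hy, rfl⟩
  have hσC : ∀ (z : {x // x ∈ D}), (σ z).1 ∉ A' := by
    intro z
    exact (Finset.mem_sdiff.mp ((σ z).2)).2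
  have hkey : ∀ x ∈ U ∪ V, ∀ y ∈ U ∪ V, (u'' x = u'' y ↔ v x = v y) := by
    intro x hx y hy
    rcases hchar x hx with ⟨a, ha, hva, hux⟩ | ⟨hd, hxV, hux⟩ <;>
      rcases hchar y hy with ⟨b, hb, hvb, huy⟩ | ⟨hd2, hyV, huy⟩
    · rw [hux, huy, hker'v a ha b hb, hva, hvb]
    · rw [hux, huy]
      constructor
      · intro hh; exact absurd (hh ▸ hmemA' a ha) (hσC _)
      · intro hh
        exfalso
        have : v y ∈ A := by rw [← hh, ← hva]; exact Finset.mem_image.mpr ⟨a, ha, rfl⟩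
        exact (Finset.mem_sdiff.mp hd2).2 this
    · rw [hux, huy]
      constructor
      · intro hh; exact absurd (hh ▸ hσC ⟨v x, hd⟩) (by simp [hmemA' b hb])
      · intro hh
        exfalso
        have : v x ∈ A := by rw [hh, ← hvb]; exact Finset.mem_image.mpr ⟨b, hb, rfl⟩
        exact (Finset.mem_sdiff.mp hd).2 this
    · rw [hux, huy]
      constructor
      · intro hh
        have := σ.injective (Subtype.ext hh)
        exact congrArg Subtype.val this
      · intro hh
        exact congrArg (fun t => (σ t).1) (Subtype.ext hh)
  -- u'' agrees with u' on U
  have hagreeU : ∀ x ∈ U, u'' x = u' x := by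
    intro x hx
    rw [hu'']; dsimp only; rw [dif_pos hx]
  have hfvinf : (φ ⊓ arrFm (L := L) U s).freeVarFinset = U := fv_inf_arr L T φ s
  have hu''real : (φ ⊓ arrFm (L := L) U s).Realize (M := N') u'' := by
    rw [realize_congr_fv _ (fun x hx => (hagreeU x (hfvinf ▸ hx)).symm)] at hu'real
    exact hu'real
  have hpsiu'' : RealizeIn L N' instN' (psiFor L T φ) u'' := by
    show (psiFor L T φ).Realize (M := N') u''
    rw [realize_psi_iff]
    exact ⟨s, hs, hu''real⟩
  refine ⟨N', instN', hN', u'', by rw [wit_eq_psi L T hQF hsat]; exact hpsiu'', ?_, ?_⟩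
  · intro x hxV y hyV
    rw [hvArr x hxV y hyV]
    exact (hkey x (Finset.mem_union_right _ hxV) y (Finset.mem_union_right _ hyV)).symm
  · intro a
    rw [wit_eq_psi L T hQF hsat, fv_psi_of_mem L T hs]
    by_cases haA : a ∈ A'
    · obtain ⟨x, hx, hxa⟩ := Finset.mem_image.mp haA
      exact ⟨x, Finset.mem_union_left _ hx, by rw [hagreeU x hx]; exact hxa⟩
    · have haC : a ∈ C := by rw [hC]; exact Finset.mem_sdiff.mpr ⟨Finset.mem_univ a, haA⟩
      set z := σ.symm ⟨a, haC⟩ with hz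
      have hz1 : (z : M) ∈ D := z.2
      obtain ⟨x, hxV, hvx⟩ := Finset.mem_image.mp (Finset.mem_sdiff.mp hz1).1
      have hxU : x ∉ U := by
        intro hxU
        exact (Finset.mem_sdiff.mp hz1).2 (hvx ▸ Finset.mem_image.mpr ⟨x, hxU, rfl⟩)
      have hxv : v x ∉ A := by rw [hvx]; exact (Finset.mem_sdiff.mp hz1).2
      refine ⟨x, Finset.mem_union_right _ hxV, ?_⟩
      rw [hu'']; dsimp only; rw [dif_neg hxU, dif_neg hxv, dif_pos hxV]
      have : (⟨v x, Finset.mem_sdiff.mpr ⟨Finset.mem_image.mpr ⟨x, hxV, rfl⟩, hxv⟩⟩ :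
          {x // x ∈ D}) = z := Subtype.ext hvx
      rw [this, hz, Equiv.apply_symm_apply]

lemma forward (hSF : StablyFiniteT L T) (hSm : SmoothT L T) :
    IsStrongPreWitness L T (wit L T) :=
  ⟨⟨fun _ h => isQF_wit L T h,
    fun _ hQF M inst hM v => wit_equiv L T hSF hQF M inst hM v,
    fun _ hQF h => wit_witness L T hSF hQF h⟩,
   fun _ hQF V E h => wit_strong L T hSm hQF V E h⟩

lemma backward (hSm : SmoothT L T) (wt : L.Formula ℕ → L.Formula ℕ)
    (hw : IsStrongPreWitness L T wt) : StablyFiniteT L T := by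
  obtain ⟨⟨hQFw, hEquiv, _⟩, hStrong⟩ := hw
  intro φ hQF M inst hM v hv
  letI := inst
  obtain ⟨w0, hw0agree, hw0⟩ := (hEquiv φ hQF M inst hM v).mp hv
  set V := (wt φ).freeVarFinset with hV
  set E : Setoid ℕ := Setoid.ker w0 with hE
  have hArr : RealizesArr E V w0 := fun x _ y _ => Iff.rfl
  obtain ⟨A, instA, hA, u, hu, huArr, hcov⟩ := hStrong φ hQF V E ⟨M, inst, hM, w0, hw0, hArr⟩
  letI := instA
  have hcov' : ∀ a : A, ∃ x ∈ V, u x = a := by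
    intro a
    obtain ⟨x, hx, hxa⟩ := hcov a
    refine ⟨x, ?_, hxa⟩
    rw [← Finset.union_self V, hV]
    exact hx
  haveI hfinA : Finite A := by
    rw [← Set.finite_univ_iff]
    apply Set.Finite.subset ((V.finite_toSet).image u)
    intro a _
    obtain ⟨x, hx, hxa⟩ := hcov' a
    exact ⟨x, hx, hxa⟩
  classical
  have hle : Cardinal.mk A ≤ Cardinal.mk M := by
    have hg : ∃ g : A → M, Function.Injective g := by
      refine ⟨fun a => w0 (hcov' a).choose, ?_⟩
      intro a b hab
      have ha := (hcov' a).choose_spec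
      have hb := (hcov' b).choose_spec
      have hE1 : E.r (hcov' a).choose (hcov' b).choose := hab
      have := (huArr _ ha.1 _ hb.1).mp hE1
      rw [ha.2, hb.2] at this
      exact this
    obtain ⟨g, hg⟩ := hg
    exact Cardinal.mk_le_of_injective hg
  have hφu : RealizeIn L A instA φ u := (hEquiv φ hQF A instA hA u).mpr ⟨u, fun _ _ => rfl, hu⟩
  exact ⟨A, instA, hA, hfinA, hle, u, hφu⟩

end SFW

/-- A theory is stably finite and smooth if and only if it is smooth and has a strong
pre-witness. -/
theorem stmt_16 (L : FirstOrder.Language.{u, v}) (T : L.Theory) :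
    (StablyFiniteT L T ∧ SmoothT L T) ↔
      (SmoothT L T ∧ ∃ wit : L.Formula ℕ → L.Formula ℕ, IsStrongPreWitness L T wit) := by
  constructor
  · rintro ⟨hSF, hSm⟩
    exact ⟨hSm, SFW.wit L T, SFW.forward L T hSF hSm⟩
  · rintro ⟨hSm, w, hw⟩
    exact ⟨SFW.backward L T hSm w hw, hSm⟩
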